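/- Given any upward closed Σ^0_2 set U of finite binary strings, there exists an infinitary self-delimiting machine M which never prints anything on its output tape such that for every string σ: (i) if σ ∈ U then there is n ≥ |σ| such that every extension of σ of length n lies in DOM(M^∞); and (ii) if σ ∈ DOM(M^∞) then σ ∈ U. Consequently ⟦DOM(M^∞)⟧ = ⟦U⟧ and INF(M^∞) is empty. -/

import Mathlib

open scoped Classical
open MeasureTheory

namespace RandProb

/-- Cantor space: the space of infinite binary sequences. -/
abbrev Cantor := ℕ → Bool

/-! ### Oracle partial recursive functions, via codes -/

/-- Codes for partial recursive functions with access to an oracle `O : ℕ → ℕ`.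
These codes play the role of (oracle) Turing machines. -/
inductive CodeO : Type
  | zero : CodeO
  | succ : CodeO
  | left : CodeO
  | right : CodeO
  | oracle : CodeO
  | pair : CodeO → CodeO → CodeO
  | comp : CodeO → CodeO → CodeO
  | prec : CodeO → CodeO → CodeO
  | rfind' : CodeO → CodeO

/-- Evaluation of an oracle code with (total) oracle `O`. -/
def CodeO.eval (O : ℕ → ℕ) : CodeO → ℕ →. ℕ
  | .zero => pure 0
  | .succ => Nat.succ
  | .left => ↑fun n : ℕ => n.unpair.1
  | .right => ↑fun n : ℕ => n.unpair.2
  | .oracle => ↑fun n : ℕ => O n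
  | .pair cf cg => fun n => Nat.pair <$> cf.eval O n <*> cg.eval O n
  | .comp cf cg => fun n => cg.eval O n >>= cf.eval O
  | .prec cf cg =>
    Nat.unpaired fun a n =>
      n.rec (cf.eval O a) fun y IH => do
        let i ← IH
        cg.eval O (Nat.pair a (Nat.pair y i))
  | .rfind' cf =>
    Nat.unpaired fun a m =>
      (Nat.rfind fun n => (fun m => m = 0) <$> cf.eval O (Nat.pair a (n + m))).map (· + m)

/-- A canonical injective numbering of oracle codes. -/
def CodeO.encode : CodeO → ℕ
  | .zero => 0
  | .succ => 1
  | .left => 2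
  | .right => 3
  | .oracle => 4
  | .pair cf cg => 2 * (2 * Nat.pair cf.encode cg.encode) + 5
  | .comp cf cg => 2 * (2 * Nat.pair cf.encode cg.encode + 1) + 5
  | .prec cf cg => 2 * (2 * Nat.pair cf.encode cg.encode) + 6
  | .rfind' cf => 2 * (2 * cf.encode + 1) + 6

/-- The Turing jump of an oracle: the halting problem relative to `O`,
as a `{0,1}`-valued function. -/
noncomputable def jump (O : ℕ → ℕ) : ℕ → ℕ := fun e =>
  if ∃ c : CodeO, c.encode = e ∧ (c.eval O e).Dom then 1 else 0

/-- `iterJump n` is `∅^(n)`, the `n`-th iterate of the halting problem (as an oracle). -/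
noncomputable def iterJump : ℕ → ℕ → ℕ
  | 0 => fun _ => 0
  | n + 1 => jump (iterJump n)

/-- `S ⊆ ℕ` is computably enumerable relative to the oracle `O`. -/
def CeIn (O : ℕ → ℕ) (S : Set ℕ) : Prop := ∃ c : CodeO, S = {m | (c.eval O m).Dom}

/-- The left Dedekind cut of `α` (as a set of codes of rationals) is c.e. in `O`. -/
def LeftCeIn (O : ℕ → ℕ) (α : ℝ) : Prop :=
  CeIn O {m | ∃ q : ℚ, Encodable.encode q = m ∧ (q : ℝ) < α}

/-- The right Dedekind cut of `α` (as a set of codes of rationals) is c.e. in `O`. -/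
def RightCeIn (O : ℕ → ℕ) (α : ℝ) : Prop :=
  CeIn O {m | ∃ q : ℚ, Encodable.encode q = m ∧ α < (q : ℝ)}

/-! ### Martin-Löf randomness for real numbers -/

/-- The `i`-th component of a Martin-Löf test coded by the set `W ⊆ ℕ`:
the union of all open rational intervals whose codes are enumerated into the
`i`-th section of `W`. -/
def testSet (W : Set ℕ) (i : ℕ) : Set ℝ :=
  {x | ∃ p q : ℚ, Nat.pair i (Encodable.encode (p, q)) ∈ W ∧ (p : ℝ) < x ∧ x < (q : ℝ)}

/-- `α` is Martin-Löf random relative to the oracle `O`. -/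
def MLRandomIn (O : ℕ → ℕ) (α : ℝ) : Prop :=
  ∀ W : Set ℕ, CeIn O W →
    (∀ i, volume (testSet W i) ≤ ENNReal.ofReal ((2 : ℝ)⁻¹ ^ i)) →
    ∃ i, α ∉ testSet W i

/-- `α` is `n`-random: Martin-Löf random relative to `∅^(n-1)`. -/
def NRandom (n : ℕ) (α : ℝ) : Prop := MLRandomIn (iterJump (n - 1)) α

/-! ### The uniform measure on Cantor space -/

/-- The binary digits of a real number (meaningful on `[0,1)`). -/
noncomputable def digits (x : ℝ) : Cantor := fun n => decide (⌊x * 2 ^ (n + 1)⌋ % 2 = 1)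

/-- The uniform (Lebesgue) product measure on Cantor space, obtained as the
pushforward of Lebesgue measure on `[0,1)` under the binary-digit map. -/
noncomputable def mu : Measure Cantor :=
  Measure.map digits (volume.restrict (Set.Ico (0 : ℝ) 1))

/-- The uniform measure of a set of elements of Cantor space, as a real number. -/
noncomputable def muR (S : Set Cantor) : ℝ := (mu S).toReal

/-! ### Strings, prefixes and cylinders -/

/-- The length-`n` initial segment of `X ∈ 2^ω`, as a finite binary string. -/
def initSeg (X : Cantor) (n : ℕ) : List Bool := (List.range n).map X

/-- `⟦S⟧`: the elements of Cantor space having a prefix in the set of strings `S`. -/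
def cyl (S : Set (List Bool)) : Set Cantor := {X | ∃ n, initSeg X n ∈ S}

/-- A set of strings is prefix-free if none of its elements properly extends another. -/
def IsPrefixFree (S : Set (List Bool)) : Prop := ∀ σ ∈ S, ∀ τ ∈ S, σ <+: τ → σ = τ

/-- A set of strings is upward closed if it is closed under taking extensions. -/
def UpClosed (S : Set (List Bool)) : Prop := ∀ σ ∈ S, ∀ τ, σ <+: τ → τ ∈ S

/-- Two strings are compatible if one is a prefix of the other. -/
def Compatible (σ τ : List Bool) : Prop := σ <+: τ ∨ τ <+: σ

/-! ### Oracle machines -/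

/-- An element of Cantor space viewed as a `{0,1}`-valued oracle. -/
def oX (X : Cantor) : ℕ → ℕ := fun n => cond (X n) 1 0

/-- `evalO X c n`: the (possibly divergent) output of the oracle machine `c`
on input `n` with oracle `X`. -/
def evalO (X : Cantor) (c : CodeO) (n : ℕ) : Part ℕ := c.eval (oX X) n

/-- The oracle obtained by writing the string `ρ` before the bits of `X`. -/
def prepend (ρ : List Bool) (X : Cantor) : Cantor := fun n =>
  if n < ρ.length then ρ.getD n false else X (n - ρ.length)

/-- `X ∈ 2^ω` extends the finite string `ρ`. -/
def Extends (X : Cantor) (ρ : List Bool) : Prop := initSeg X ρ.length = ρ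

/-- `u` is a universal oracle machine: some effective, prefix-free translation
`c ↦ σ_c` satisfies `u(σ_c * X, n) ≃ c(X, n)` for all machines `c`. -/
def UniversalOM (u : CodeO) : Prop :=
  ∃ σ : CodeO → List Bool,
    (∃ f : ℕ → ℕ, Computable f ∧ ∀ c : CodeO, f c.encode = Encodable.encode (σ c)) ∧
    IsPrefixFree (Set.range σ) ∧
    ∀ (c : CodeO) (X : Cantor) (n : ℕ), evalO (prepend (σ c) X) u n = evalO X c n

/-- `TOT(c)`: the oracles `X` such that the function `c(X)` is total. -/
def TOT (c : CodeO) : Set Cantor := {X | ∀ n, (evalO X c n).Dom}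

/-- The domain of the partial function `c(X)`. -/
def domSet (c : CodeO) (X : Cantor) : Set ℕ := {n | (evalO X c n).Dom}

/-- The range of the partial function `c(X)`. -/
def ranSet (c : CodeO) (X : Cantor) : Set ℕ := {v | ∃ n, v ∈ evalO X c n}

/-- `INF(c)`: the oracles `X` such that `c(X)` has infinite domain. -/
def INF (c : CodeO) : Set Cantor := {X | (domSet c X).Infinite}

/-- `COF(c)`: the oracles `X` such that `c(X)` has cofinite domain. -/
def COF (c : CodeO) : Set Cantor := {X | (domSet c X)ᶜ.Finite}

/-- `COM(c)`: the oracles `X` such that `c(X)` has computable domain. -/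
def COM (c : CodeO) : Set Cantor := {X | ComputablePred fun n => n ∈ domSet c X}

/-- The characteristic function of a set of naturals. -/
noncomputable def chi (A : Set ℕ) : ℕ → ℕ := fun n => if n ∈ A then 1 else 0

/-- Turing reducibility between sets of naturals. -/
def TuringLEs (B A : Set ℕ) : Prop := ∃ c : CodeO, ∀ n, c.eval (chi A) n = Part.some (chi B n)

/-- The halting problem `∅'` as a set of naturals. -/
noncomputable def HaltingSet : Set ℕ := {e | iterJump 1 e = 1}

/-- `COMPL(c)`: the oracles `X` such that the domain of `c(X)` computes the halting problem. -/
noncomputable def COMPL (c : CodeO) : Set Cantor := {X | TuringLEs HaltingSet (domSet c X)}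

/-- Turing reducibility between total functions on ℕ. -/
def TuringLEf (f g : ℕ → ℕ) : Prop := ∃ c : CodeO, ∀ n, c.eval g n = Part.some (f n)

/-- A real number viewed as an oracle, via its binary expansion. -/
noncomputable def realOracle (α : ℝ) : ℕ → ℕ := oX (digits α)

/-- Two reals have Turing-incomparable degrees. -/
noncomputable def TIncompReal (α β : ℝ) : Prop :=
  ¬ TuringLEf (realOracle α) (realOracle β) ∧ ¬ TuringLEf (realOracle β) (realOracle α)

/-! ### Arithmetical hierarchy -/

/-- Evaluation with the trivial (empty) oracle: ordinary partial recursion. -/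
def eval0 (c : CodeO) : ℕ →. ℕ := c.eval fun _ => 0

/-- `SigmaNumIdx n c` is the `Σ^0_{n+1}` subset of `ℕ` with index `c`. -/
def SigmaNumIdx : ℕ → CodeO → Set ℕ
  | 0, c => {m | (eval0 c m).Dom}
  | n + 1, c => {m | ∃ k, Nat.pair m k ∉ SigmaNumIdx n c}

/-- `S ⊆ ℕ` is `Σ^0_n` (intended for `n ≥ 1`). -/
def SigmaN (n : ℕ) (S : Set ℕ) : Prop := ∃ c : CodeO, S = SigmaNumIdx (n - 1) c

/-- The set of codes of the elements of a set of binary strings. -/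
def strCodes (S : Set (List Bool)) : Set ℕ := {m | ∃ σ ∈ S, Encodable.encode σ = m}

/-- A set of binary strings is `Σ^0_n`. -/
def SigmaStr (n : ℕ) (S : Set (List Bool)) : Prop := SigmaN n (strCodes S)

/-- A set of binary strings is `Π^0_n`: its complement is `Σ^0_n`. -/
def PiStr (n : ℕ) (S : Set (List Bool)) : Prop := SigmaStr n Sᶜ

/-- A set of binary strings is c.e. relative to the oracle `O`. -/
def CeStrIn (O : ℕ → ℕ) (S : Set (List Bool)) : Prop := CeIn O (strCodes S)

/-- `SigmaClassIdx n c m` is the `Σ^0_{n+1}` class of elements of Cantor space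
with index `c` and parameter `m`. -/
def SigmaClassIdx : ℕ → CodeO → ℕ → Set Cantor
  | 0, c, m => {X | (evalO X c m).Dom}
  | n + 1, c, m => {X | ∃ k, X ∉ SigmaClassIdx n c (Nat.pair m k)}

/-! ### Monotone machines -/

/-- A monotone machine: a partial computable, monotone map on finite binary strings. -/
structure MonoMachine where
  f : List Bool →. List Bool
  partrec : Partrec f
  mono : ∀ ⦃σ τ a b : List Bool⦄, σ <+: τ → a ∈ f σ → b ∈ f τ → a <+: b

/-- The oracles `X` such that the output of the monotone machine on `X` is infinite. -/
def MonoINF (M : MonoMachine) : Set Cantor :=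
  {X | ∀ k, ∃ n a, a ∈ M.f (initSeg X n) ∧ k ≤ a.length}

/-- The `k`-th bit of the output `M(X)` of a monotone machine is `b`. -/
def MonoMachine.hasBit (M : MonoMachine) (X : Cantor) (k : ℕ) (b : Bool) : Prop :=
  ∃ n a, a ∈ M.f (initSeg X n) ∧ a[k]? = some b

/-- `U` is a universal monotone machine. -/
def UniversalMono (U : MonoMachine) : Prop :=
  ∃ (M : ℕ → MonoMachine) (σ : ℕ → List Bool),
    Partrec₂ (fun (e : ℕ) (τ : List Bool) => (M e).f τ) ∧
    (∀ V : MonoMachine, ∃ e, (M e).f = V.f) ∧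
    Computable σ ∧ IsPrefixFree (Set.range σ) ∧
    ∀ e τ, U.f (σ e ++ τ) = (M e).f τ

/-! ### Infinitary self-delimiting machines -/

/-- Chaitin's infinitary self-delimiting machines: `f σ n` is the `n`-th approximation
of the output on program `σ` (`none` meaning divergence); the convergence relation is
decidable, approximations are monotone, and machines are self-delimiting. -/
structure InfMachine where
  f : List Bool → ℕ → Option (List Bool)
  computable : Computable₂ f
  mono : ∀ σ m n a, n < m → f σ m = some a → ∃ b, f σ n = some b ∧ b <+: a
  sd : ∀ σ τ n a, f σ n = some a → f (σ ++ τ) n = some a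

/-- `M^∞(σ)↓`: all approximations converge. -/
def InfMachine.domInf (M : InfMachine) (σ : List Bool) : Prop := ∀ n, M.f σ n ≠ none

/-- The domain of `M^∞`. -/
def InfMachine.DOM (M : InfMachine) : Set (List Bool) := {σ | M.domInf σ}

/-- The output `M^∞(σ)` is infinite (a stream). -/
def InfMachine.outInf (M : InfMachine) (σ : List Bool) : Prop :=
  ∀ k, ∃ n a, M.f σ n = some a ∧ k ≤ a.length

/-- `FIN(M^∞)`: programs in the domain with finite output. -/
def InfMachine.FIN (M : InfMachine) : Set (List Bool) := {σ | M.domInf σ ∧ ¬ M.outInf σ}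

/-- `INF(M^∞)`: programs in the domain with infinite output. -/
def InfMachine.INF (M : InfMachine) : Set (List Bool) := {σ | M.domInf σ ∧ M.outInf σ}

/-- The `k`-th bit of the output `M^∞(σ)` is `b`. -/
def InfMachine.hasBit (M : InfMachine) (σ : List Bool) (k : ℕ) (b : Bool) : Prop :=
  ∃ n a, M.f σ n = some a ∧ a[k]? = some b

/-- The domain of the prefix-free machine `M^*`: minimal strings in the domain of `M^∞`. -/
def InfMachine.DOMstar (M : InfMachine) : Set (List Bool) :=
  {σ | M.domInf σ ∧ ∀ τ, τ <+: σ → τ ≠ σ → ¬ M.domInf τ}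

/-- Programs whose output is a stream with a tail of 1s. -/
def InfMachine.COFout (M : InfMachine) : Set (List Bool) :=
  {σ | M.domInf σ ∧ M.outInf σ ∧ ∃ t, ∀ k, t ≤ k → M.hasBit σ k true}

/-- `A^∞(σ) ≃ B^∞(τ)`: both converge or both diverge, with equal outputs. -/
def InfAgree (A : InfMachine) (σ : List Bool) (B : InfMachine) (τ : List Bool) : Prop :=
  (A.domInf σ ↔ B.domInf τ) ∧ (A.domInf σ → ∀ k b, (A.hasBit σ k b ↔ B.hasBit τ k b))

/-- `U` is a universal infinitary self-delimiting machine. -/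
def UniversalInf (U : InfMachine) : Prop :=
  ∃ (M : ℕ → InfMachine) (σ : ℕ → List Bool),
    Computable (fun p : ℕ × List Bool × ℕ => (M p.1).f p.2.1 p.2.2) ∧
    (∀ V : InfMachine, ∃ e, ∀ τ, InfAgree (M e) τ V τ) ∧
    Computable σ ∧ IsPrefixFree (Set.range σ) ∧
    ∀ e τ, InfAgree U (σ e ++ τ) (M e) τ

end RandProb

namespace RandProb


open Nat.Partrec (Code)
open Nat.Partrec.Code

open Nat.Partrec (Code)
open Nat.Partrec.Code

/-- `take'` : computable-friendly version of `List.take`. -/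
def take' (τ : List Bool) (i : ℕ) : List Bool := (List.range i).map fun j => τ.getD j false

lemma take'_eq {τ : List Bool} {i : ℕ} (h : i ≤ τ.length) : take' τ i = τ.take i := by
  apply List.ext_getElem?
  intro j
  simp only [take', List.getElem?_map, List.getElem?_range, List.getElem?_take]
  by_cases hj : j < i
  · simp only [if_pos hj]
    have hjl : j < τ.length := lt_of_lt_of_le hj h
    simp only [List.getElem?_range hj, Option.map_some, List.getElem?_eq_getElem hjl,
      Option.getD_some]
    simp [List.getD_eq_getElem?_getD, List.getElem?_eq_getElem hjl]
  · rw [if_neg hj]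
    simp [Nat.le_of_not_lt hj]

lemma take'_prefix {τ : List Bool} {i : ℕ} (h : i ≤ τ.length) : take' τ i <+: τ := by
  rw [take'_eq h]; exact List.take_prefix i τ

/-- step-bounded divergence test. -/
def dvg (c : Code) (n : ℕ) (m : ℕ) : Bool := (evaln n c m).isNone

/-- The bounded search predicate. -/
def gB (c : Code) (τ : List Bool) (n : ℕ) : Bool :=
  (List.range (τ.length + 1)).foldr
    (fun i b =>
      ((List.range (τ.length + 1)).foldr
        (fun k b' => dvg c n (Nat.pair (Encodable.encode (take' τ i)) k) || b') false) || b)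
    false

lemma foldr_or {α : Type*} (p : α → Bool) (l : List α) :
    l.foldr (fun x b => p x || b) false = true ↔ ∃ x ∈ l, p x = true := by
  induction l with
  | nil => simp
  | cons a l ih => simp [ih]

lemma gB_iff (c : Code) (τ : List Bool) (n : ℕ) :
    gB c τ n = true ↔ ∃ i ≤ τ.length, ∃ k ≤ τ.length,
      evaln n c (Nat.pair (Encodable.encode (take' τ i)) k) = none := by
  unfold gB
  rw [foldr_or]
  constructor
  · rintro ⟨i, hi, hfold⟩
    rw [foldr_or] at hfold
    obtain ⟨k, hk, hd⟩ := hfold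
    rw [List.mem_range, Nat.lt_succ_iff] at hi hk
    exact ⟨i, hi, k, hk, Option.isNone_iff_eq_none.1 hd⟩
  · rintro ⟨i, hi, k, hk, hd⟩
    refine ⟨i, List.mem_range.2 (Nat.lt_succ_of_le hi), ?_⟩
    rw [foldr_or]
    exact ⟨k, List.mem_range.2 (Nat.lt_succ_of_le hk), Option.isNone_iff_eq_none.2 hd⟩

lemma gB_antitone {c : Code} {τ : List Bool} {m n : ℕ} (h : n ≤ m) (hm : gB c τ m = true) :
    gB c τ n = true := by
  rw [gB_iff] at hm ⊢
  obtain ⟨i, hi, k, hk, hd⟩ := hm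
  refine ⟨i, hi, k, hk, ?_⟩
  cases he : evaln n c (Nat.pair (Encodable.encode (take' τ i)) k) with
  | none => rfl
  | some x =>
    exact absurd (evaln_mono h he) (by simp [hd])

lemma gB_append {c : Code} {σ ρ : List Bool} {n : ℕ} (h : gB c σ n = true) :
    gB c (σ ++ ρ) n = true := by
  rw [gB_iff] at h ⊢
  obtain ⟨i, hi, k, hk, hd⟩ := h
  have hlen : σ.length ≤ (σ ++ ρ).length := by simp
  have htk : take' (σ ++ ρ) i = take' σ i := by
    rw [take'_eq (le_trans hi hlen), take'_eq hi, List.take_append_of_le_length hi]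
  exact ⟨i, le_trans hi hlen, k, le_trans hk hlen, by rw [htk]; exact hd⟩

/-- Primrec of gB. -/
lemma gB_primrec (c : Code) : Primrec₂ (gB c) := by
  have hev : Primrec₂ fun (n m : ℕ) => evaln n c m :=
    (primrec_evaln.comp (((Primrec.fst.pair (Primrec.const c)).pair Primrec.snd))).to₂
  have hisNone : Primrec (fun o : Option ℕ => o.isNone) :=
    (Primrec.not.comp Primrec.option_isSome).of_eq fun o => by cases o <;> rfl
  have hdvg : Primrec₂ fun (n m : ℕ) => dvg c n m :=
    (hisNone.comp (hev.comp Primrec.fst Primrec.snd)).to₂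
  have htake' : Primrec₂ take' := by
    have : Primrec₂ fun (p : List Bool × ℕ) (j : ℕ) => p.1.getD j false :=
      ((Primrec.list_getD false).comp (Primrec.fst.comp Primrec.fst) Primrec.snd).to₂
    exact (Primrec.list_map (Primrec.list_range.comp Primrec.snd) this).to₂
  have hor : Primrec₂ (· || ·) := Primrec.dom_bool₂ _
  -- inner fold: argument (a, i) where a = (τ, n)
  have hinner : Primrec₂ fun (a : List Bool × ℕ) (i : ℕ) =>
      (List.range (a.1.length + 1)).foldr
        (fun k b' => dvg c a.2 (Nat.pair (Encodable.encode (take' a.1 i)) k) || b') false := by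
    have hlist : Primrec fun p : (List Bool × ℕ) × ℕ => List.range (p.1.1.length + 1) :=
      Primrec.list_range.comp (Primrec.succ.comp (Primrec.list_length.comp
        (Primrec.fst.comp Primrec.fst)))
    have hh : Primrec₂ fun (p : (List Bool × ℕ) × ℕ) (q : ℕ × Bool) =>
        dvg c p.1.2 (Nat.pair (Encodable.encode (take' p.1.1 p.2)) q.1) || q.2 := by
      have h1 : Primrec fun pq : ((List Bool × ℕ) × ℕ) × (ℕ × Bool) => take' pq.1.1.1 pq.1.2 :=
        htake'.comp (Primrec.fst.comp (Primrec.fst.comp Primrec.fst))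
          (Primrec.snd.comp Primrec.fst)
      have h2 : Primrec fun pq : ((List Bool × ℕ) × ℕ) × (ℕ × Bool) =>
          Nat.pair (Encodable.encode (take' pq.1.1.1 pq.1.2)) pq.2.1 :=
        Primrec₂.natPair.comp (Primrec.encode.comp h1) (Primrec.fst.comp Primrec.snd)
      have h3 : Primrec fun pq : ((List Bool × ℕ) × ℕ) × (ℕ × Bool) =>
          dvg c pq.1.1.2 (Nat.pair (Encodable.encode (take' pq.1.1.1 pq.1.2)) pq.2.1) :=
        hdvg.comp (Primrec.snd.comp (Primrec.fst.comp Primrec.fst)) h2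
      exact (hor.comp h3 (Primrec.snd.comp Primrec.snd)).to₂
    exact (Primrec.list_foldr hlist (Primrec.const false) hh).to₂
  -- outer fold
  have hlist2 : Primrec fun a : List Bool × ℕ => List.range (a.1.length + 1) :=
    Primrec.list_range.comp (Primrec.succ.comp (Primrec.list_length.comp Primrec.fst))
  have hh2 : Primrec₂ fun (a : List Bool × ℕ) (q : ℕ × Bool) =>
      ((List.range (a.1.length + 1)).foldr
        (fun k b' => dvg c a.2 (Nat.pair (Encodable.encode (take' a.1 q.1)) k) || b') false)
        || q.2 := by
    have h4 : Primrec fun aq : (List Bool × ℕ) × (ℕ × Bool) =>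
        (List.range (aq.1.1.length + 1)).foldr
          (fun k b' => dvg c aq.1.2 (Nat.pair (Encodable.encode (take' aq.1.1 aq.2.1)) k) || b')
          false :=
      hinner.comp Primrec.fst (Primrec.fst.comp Primrec.snd)
    exact (hor.comp h4 (Primrec.snd.comp Primrec.snd)).to₂
  exact (Primrec.list_foldr hlist2 (Primrec.const false) hh2).of_eq fun a => rfl


/-- Translation of oracle codes (with the trivial oracle) to ordinary codes. -/
def toC : CodeO → Nat.Partrec.Code
  | .zero => .zero
  | .succ => .succ
  | .left => .left
  | .right => .right
  | .oracle => .zero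
  | .pair a b => .pair (toC a) (toC b)
  | .comp a b => .comp (toC a) (toC b)
  | .prec a b => .prec (toC a) (toC b)
  | .rfind' a => .rfind' (toC a)

lemma toC_eval (c : CodeO) : eval0 c = (toC c).eval := by
  induction c <;> simp_all [eval0, CodeO.eval, Nat.Partrec.Code.eval, toC]
  all_goals rfl

/-- The machine built from a code. -/
def mkM (c : Code) : InfMachine where
  f := fun τ n => bif gB c τ n then some [] else none
  computable :=
    (Primrec.cond ((gB_primrec c).comp Primrec.fst Primrec.snd)
      (Primrec.const (some ([] : List Bool))) (Primrec.const none)).to₂.to_comp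
  mono := by
    intro σ m n a hnm ha
    have hg : gB c σ m = true := by
      by_contra hg
      rw [Bool.not_eq_true] at hg
      simp [hg] at ha
    have ha' : a = [] := by simpa [hg] using ha
    refine ⟨[], ?_, by simp [ha']⟩
    show (bif gB c σ n then some [] else none) = some []
    rw [gB_antitone (le_of_lt hnm) hg]
    rfl
  sd := by
    intro σ τ n a ha
    have hg : gB c σ n = true := by
      by_contra hg
      rw [Bool.not_eq_true] at hg
      simp [hg] at ha
    show (bif gB c (σ ++ τ) n then some [] else none) = some a
    rw [gB_append hg]
    simpa [hg] using ha

lemma mkM_dom (c : Code) (σ : List Bool) :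
    (mkM c).domInf σ ↔ ∀ n, gB c σ n = true := by
  constructor
  · intro h n
    by_contra hg
    rw [Bool.not_eq_true] at hg
    exact h n (by simp [mkM, hg])
  · intro h n
    simp [mkM, h n]

lemma initSeg_length (X : Cantor) (n : ℕ) : (initSeg X n).length = n := by simp [initSeg]

lemma initSeg_prefix (X : Cantor) {n m : ℕ} (h : n ≤ m) : initSeg X n <+: initSeg X m := by
  have : initSeg X n = (initSeg X m).take n := by
    unfold initSeg
    rw [← List.map_take, List.take_range, Nat.min_eq_left h]
  rw [this]
  exact List.take_prefix _ _

/-- **From a `Σ^0_2` set of strings to an infinitary self-delimiting machine.**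
Given an upward closed `Σ^0_2` set `U` of strings there is an infinitary self-delimiting
machine `M` which never prints anything such that: (i) if `σ ∈ U` then for some
`n ≥ |σ|` every extension of `σ` of length `n` is in `DOM(M^∞)`; (ii) every
`σ ∈ DOM(M^∞)` is in `U`.  Consequently `⟦DOM(M^∞)⟧ = ⟦U⟧` and `INF(M^∞) = ∅`. -/
theorem sigma2_to_infinitary_machine (U : Set (List Bool)) (hU : SigmaStr 2 U)
    (hup : UpClosed U) :
    ∃ M : InfMachine,
      (∀ σ n a, M.f σ n = some a → a = []) ∧
      (∀ σ ∈ U, ∃ n, σ.length ≤ n ∧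
        ∀ τ : List Bool, σ <+: τ → τ.length = n → τ ∈ M.DOM) ∧
      (∀ σ ∈ M.DOM, σ ∈ U) ∧
      cyl M.DOM = cyl U ∧ M.INF = ∅ := by
  obtain ⟨c₀, hc₀⟩ := hU
  set c := toC c₀ with hc
  -- membership characterization
  have hdomc : ∀ m : ℕ, ¬ (eval0 c₀ m).Dom ↔ ∀ n, evaln n c m = none := by
    intro m
    rw [toC_eval, Part.dom_iff_mem]
    constructor
    · intro h n
      rw [Option.eq_none_iff_forall_not_mem]
      intro x hx
      exact h ⟨x, evaln_sound hx⟩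
    · rintro h ⟨y, hy⟩
      obtain ⟨n, hn⟩ := evaln_complete.1 hy
      rw [h n] at hn
      exact Option.not_mem_none y hn
  have hmem : ∀ σ : List Bool, σ ∈ U ↔
      ∃ k, ∀ n, evaln n c (Nat.pair (Encodable.encode σ) k) = none := by
    intro σ
    have h1 : σ ∈ U ↔ Encodable.encode σ ∈ strCodes U := by
      constructor
      · exact fun h => ⟨σ, h, rfl⟩
      · rintro ⟨σ', hσ', he⟩
        rwa [Encodable.encode_injective he] at hσ'
    rw [h1, hc₀]
    show (∃ k, Nat.pair (Encodable.encode σ) k ∉ SigmaNumIdx 0 c₀) ↔ _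
    simp only [SigmaNumIdx, Set.mem_setOf_eq]
    exact exists_congr fun k => hdomc _
  refine ⟨mkM c, ?_, ?_, ?_, ?_, ?_⟩
  · -- never prints
    intro σ n a ha
    cases hg : gB c σ n with
    | false => simp [mkM, hg] at ha
    | true => simp [mkM, hg] at ha; exact ha
  · -- (i)
    intro σ hσU
    obtain ⟨k, hk⟩ := (hmem σ).1 hσU
    refine ⟨max σ.length k, le_max_left _ _, ?_⟩
    intro τ hpre hlen
    show (mkM c).domInf τ
    rw [mkM_dom]
    intro n
    rw [gB_iff]
    refine ⟨σ.length, by rw [hlen]; exact le_max_left _ _,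
      k, by rw [hlen]; exact le_max_right _ _, ?_⟩
    have htk : take' τ σ.length = σ := by
      rw [take'_eq (by rw [hlen]; exact le_max_left _ _)]
      obtain ⟨ρ, rfl⟩ := hpre
      exact List.take_left
    rw [htk]
    exact hk n
  · -- (ii) DOM ⊆ U
    intro σ hσ
    have hσ' : ∀ n, gB c σ n = true := (mkM_dom c σ).1 hσ
    by_contra hσU
    have hnot : ∀ i ≤ σ.length, ∀ k ≤ σ.length,
        ∃ n x, x ∈ evaln n c (Nat.pair (Encodable.encode (take' σ i)) k) := by
      intro i hi k hk
      by_contra hno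
      push_neg at hno
      have hdvg : ∀ n, evaln n c (Nat.pair (Encodable.encode (take' σ i)) k) = none :=
        fun n => Option.eq_none_iff_forall_not_mem.2 (hno n)
      have hU' : take' σ i ∈ U := (hmem _).2 ⟨k, hdvg⟩
      exact hσU (hup _ hU' _ (take'_prefix hi))
    have hnot' : ∀ p : ℕ × ℕ, ∃ n, p.1 ≤ σ.length → p.2 ≤ σ.length →
        ∃ x, x ∈ evaln n c (Nat.pair (Encodable.encode (take' σ p.1)) p.2) := by
      intro p
      by_cases h1 : p.1 ≤ σ.length
      · by_cases h2 : p.2 ≤ σ.length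
        · obtain ⟨n, x, hx⟩ := hnot p.1 h1 p.2 h2
          exact ⟨n, fun _ _ => ⟨x, hx⟩⟩
        · exact ⟨0, fun _ h => absurd h h2⟩
      · exact ⟨0, fun h => absurd h h1⟩
    choose F hF using hnot'
    set N := ((Finset.range (σ.length + 1)) ×ˢ (Finset.range (σ.length + 1))).sup F with hN
    obtain ⟨i, hi, k, hk, hd⟩ := (gB_iff c σ N).1 (hσ' N)
    obtain ⟨x, hx⟩ := hF (i, k) hi hk
    have hle : F (i, k) ≤ N :=
      Finset.le_sup (by simp [Finset.mem_product, Nat.lt_succ_of_le, hi, hk])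
    have hmem' := evaln_mono hle hx
    rw [hd] at hmem'
    exact Option.not_mem_none x hmem'
  · -- cylinders
    have hsub : ∀ σ ∈ (mkM c).DOM, σ ∈ U := by
      intro σ hσ
      have hσ' : ∀ n, gB c σ n = true := (mkM_dom c σ).1 hσ
      by_contra hσU
      have hnot : ∀ i ≤ σ.length, ∀ k ≤ σ.length,
          ∃ n x, x ∈ evaln n c (Nat.pair (Encodable.encode (take' σ i)) k) := by
        intro i hi k hk
        by_contra hno
        push_neg at hno
        have hdvg : ∀ n, evaln n c (Nat.pair (Encodable.encode (take' σ i)) k) = none :=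
          fun n => Option.eq_none_iff_forall_not_mem.2 (hno n)
        have hU' : take' σ i ∈ U := (hmem _).2 ⟨k, hdvg⟩
        exact hσU (hup _ hU' _ (take'_prefix hi))
      have hnot' : ∀ p : ℕ × ℕ, ∃ n, p.1 ≤ σ.length → p.2 ≤ σ.length →
          ∃ x, x ∈ evaln n c (Nat.pair (Encodable.encode (take' σ p.1)) p.2) := by
        intro p
        by_cases h1 : p.1 ≤ σ.length
        · by_cases h2 : p.2 ≤ σ.length
          · obtain ⟨n, x, hx⟩ := hnot p.1 h1 p.2 h2
            exact ⟨n, fun _ _ => ⟨x, hx⟩⟩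
          · exact ⟨0, fun _ h => absurd h h2⟩
        · exact ⟨0, fun h => absurd h h1⟩
      choose F hF using hnot'
      set N := ((Finset.range (σ.length + 1)) ×ˢ (Finset.range (σ.length + 1))).sup F with hN
      obtain ⟨i, hi, k, hk, hd⟩ := (gB_iff c σ N).1 (hσ' N)
      obtain ⟨x, hx⟩ := hF (i, k) hi hk
      have hle : F (i, k) ≤ N :=
        Finset.le_sup (by simp [Finset.mem_product, Nat.lt_succ_of_le, hi, hk])
      have hmem' := evaln_mono hle hx
      rw [hd] at hmem'
      exact Option.not_mem_none x hmem'
    ext X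
    constructor
    · rintro ⟨n, hn⟩
      exact ⟨n, hsub _ hn⟩
    · rintro ⟨n, hn⟩
      obtain ⟨k, hk⟩ := (hmem _).1 hn
      refine ⟨max (initSeg X n).length k, ?_⟩
      show (mkM c).domInf _
      rw [mkM_dom]
      intro m
      rw [gB_iff]
      have hlen : (initSeg X (max (initSeg X n).length k)).length =
          max (initSeg X n).length k := initSeg_length _ _
      refine ⟨(initSeg X n).length, by rw [hlen]; exact le_max_left _ _,
        k, by rw [hlen]; exact le_max_right _ _, ?_⟩
      have hpre : initSeg X n <+: initSeg X (max (initSeg X n).length k) := by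
        rw [initSeg_length]
        exact initSeg_prefix X (le_max_left _ _)
      have htk : take' (initSeg X (max (initSeg X n).length k)) (initSeg X n).length =
          initSeg X n := by
        rw [take'_eq (by rw [hlen]; exact le_max_left _ _)]
        obtain ⟨ρ, hρ⟩ := hpre
        rw [← hρ]
        exact List.take_left
      rw [htk]
      exact hk m
  · -- INF empty
    rw [Set.eq_empty_iff_forall_notMem]
    rintro σ ⟨hdom, hout⟩
    obtain ⟨n, a, ha, hla⟩ := hout 1
    cases hg : gB c σ n with
    | false => simp [mkM, hg] at ha
    | true =>
      simp [mkM, hg] at ha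
      rw [ha] at hla
      simp at hla

end RandProb
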